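/- Suppose h_k, h_{k+1} : [0,1] → ℝ are C¹ with h_{k+1}(0) = 1, h_{k+1}(x) > 0 on [0,1], h(x) = 1/(1-x), 0 ≤ h_k(x) ≤ h_{k+1}(x) ≤ h(x) on [0,1), and h'_{k+1} + (h_{k+1} - h_k)² = h²_{k+1}. Then ∫₀¹ (1 - h_{k+1}(x)/h(x))² dx ≤ 1/h_{k+1}(1) ≤ ∫₀¹ (1 - h_k(x)/h(x))² dx. -/

import Mathlib

private lemma nonneg_at_one {f : ℝ → ℝ} (hf : ContinuousOn f (Set.Icc 0 1))
    (h : ∀ x ∈ Set.Ico (0:ℝ) 1, 0 ≤ f x) : 0 ≤ f 1 := by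
  have hne : (nhdsWithin (1:ℝ) (Set.Ico (0:ℝ) 1)).NeBot := by
    rw [← mem_closure_iff_nhdsWithin_neBot, closure_Ico (by norm_num : (0:ℝ) ≠ 1)]
    exact Set.right_mem_Icc.mpr (by norm_num)
  have ht : Filter.Tendsto f (nhdsWithin 1 (Set.Ico (0:ℝ) 1)) (nhds (f 1)) :=
    (hf 1 (by norm_num)).mono Set.Ico_subset_Icc_self
  exact ge_of_tendsto ht (Filter.eventually_of_mem self_mem_nhdsWithin h)

/-- Proposition "one": `‖1 - h_{k+1}/h‖² ≤ 1/h_{k+1}(1) ≤ ‖1 - h_k/h‖²`,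
where `h(x) = 1/(1-x)` and `h_k(x)/h(x) = (1-x)·h_k(x)`. -/
theorem prop_one (h₀ h₁ : ℝ → ℝ)
    (hc₀ : ContinuousOn h₀ (Set.Icc 0 1))
    (hinit₁ : h₁ 0 = 1)
    (hpos : ∀ x ∈ Set.Icc (0:ℝ) 1, 0 < h₁ x)
    (hord : ∀ x ∈ Set.Ico (0:ℝ) 1,
      0 ≤ h₀ x ∧ h₀ x ≤ h₁ x ∧ (1 - x) * h₁ x ≤ 1)
    (hderiv : ∀ x ∈ Set.Icc (0:ℝ) 1,
      HasDerivAt h₁ ((h₁ x)^2 - (h₁ x - h₀ x)^2) x) :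
    (∫ x in (0:ℝ)..1, (1 - (1 - x) * h₁ x)^2) ≤ 1 / h₁ 1 ∧
      1 / h₁ 1 ≤ ∫ x in (0:ℝ)..1, (1 - (1 - x) * h₀ x)^2 := by
  have h01 : (0:ℝ) ≤ 1 := zero_le_one
  have huIcc : Set.uIcc (0:ℝ) 1 = Set.Icc 0 1 := Set.uIcc_of_le h01
  have hc₁ : ContinuousOn h₁ (Set.Icc 0 1) := fun x hx =>
    (hderiv x hx).continuousAt.continuousWithinAt
  have hne : ∀ x ∈ Set.Icc (0:ℝ) 1, h₁ x ≠ 0 := fun x hx => (hpos x hx).ne'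
  -- extend the order hypotheses to the closed interval
  have h0nn : ∀ x ∈ Set.Icc (0:ℝ) 1, 0 ≤ h₀ x := by
    intro x hx
    rcases hx.2.lt_or_eq with h | h
    · exact (hord x ⟨hx.1, h⟩).1
    · subst h; exact nonneg_at_one hc₀ (fun y hy => (hord y hy).1)
  have hord2 : ∀ x ∈ Set.Icc (0:ℝ) 1, h₀ x ≤ h₁ x := by
    intro x hx
    rcases hx.2.lt_or_eq with h | h
    · exact (hord x ⟨hx.1, h⟩).2.1
    · subst h
      have := nonneg_at_one (hc₁.sub hc₀) (fun y hy => sub_nonneg.mpr (hord y hy).2.1)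
      rw [Pi.sub_apply] at this
      linarith [this]
  have hup : ∀ x ∈ Set.Icc (0:ℝ) 1, (1 - x) * h₁ x ≤ 1 := by
    intro x hx
    rcases hx.2.lt_or_eq with h | h
    · exact (hord x ⟨hx.1, h⟩).2.2
    · subst h; simp
  -- the three integrands
  set q : ℝ → ℝ := fun x => ((h₁ x - h₀ x) / h₁ x)^2 with hqdef
  set g : ℝ → ℝ := fun x => (1 - (1 - x) * h₁ x)^2 with hgdef
  set w : ℝ → ℝ := fun x => (1 - x)^2 * (h₁ x - h₀ x)^2 with hwdef
  have hcq : ContinuousOn q (Set.Icc 0 1) := (((hc₁.sub hc₀).div hc₁ hne).pow 2)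
  have hcg : ContinuousOn g (Set.Icc 0 1) := by
    apply ContinuousOn.pow
    exact continuousOn_const.sub ((continuousOn_const.sub continuousOn_id).mul hc₁)
  have hcw : ContinuousOn w (Set.Icc 0 1) := by
    exact ((continuousOn_const.sub continuousOn_id).pow 2).mul ((hc₁.sub hc₀).pow 2)
  have hcb : ContinuousOn (fun x => (1 - (1 - x) * h₀ x)^2) (Set.Icc 0 1) := by
    apply ContinuousOn.pow
    exact continuousOn_const.sub ((continuousOn_const.sub continuousOn_id).mul hc₀)
  have hiq : IntervalIntegrable q MeasureTheory.volume 0 1 :=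
    (hcq.mono huIcc.subset).intervalIntegrable
  have hig : IntervalIntegrable g MeasureTheory.volume 0 1 :=
    (hcg.mono huIcc.subset).intervalIntegrable
  have hiw : IntervalIntegrable w MeasureTheory.volume 0 1 :=
    (hcw.mono huIcc.subset).intervalIntegrable
  have hib : IntervalIntegrable (fun x => (1 - (1 - x) * h₀ x)^2) MeasureTheory.volume 0 1 :=
    (hcb.mono huIcc.subset).intervalIntegrable
  -- Identity A : 1/h₁ 1 = ∫ q
  have hA : 1 / h₁ 1 = ∫ x in (0:ℝ)..1, q x := by
    have key : ∫ x in (0:ℝ)..1, (q x - 1) = (h₁ 1)⁻¹ - (h₁ 0)⁻¹ := by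
      apply intervalIntegral.integral_eq_sub_of_hasDerivAt (f := fun y => (h₁ y)⁻¹)
      · intro x hx
        rw [huIcc] at hx
        have hd := (hderiv x hx).fun_inv (hne x hx)
        refine hd.congr_deriv ?_
        have hx0 := hne x hx
        simp only [hqdef]
        field_simp
        ring
      · exact ((hcq.sub continuousOn_const).mono huIcc.subset).intervalIntegrable
    have hsub : ∫ x in (0:ℝ)..1, (q x - 1) =
        (∫ x in (0:ℝ)..1, q x) - ∫ x in (0:ℝ)..1, (1:ℝ) :=
      intervalIntegral.integral_sub hiq intervalIntegrable_const
    rw [hsub] at key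
    simp only [intervalIntegral.integral_const, smul_eq_mul, mul_one, sub_zero] at key
    rw [hinit₁] at key
    rw [one_div]
    linarith
  -- Identity B : ∫ g = ∫ w
  have hB : (∫ x in (0:ℝ)..1, g x) = ∫ x in (0:ℝ)..1, w x := by
    have key : ∫ x in (0:ℝ)..1, (g x - w x) =
        (fun x => x + (1 - x)^2 * h₁ x) 1 - (fun x => x + (1 - x)^2 * h₁ x) 0 := by
      apply intervalIntegral.integral_eq_sub_of_hasDerivAt (f := fun y => y + (1 - y)^2 * h₁ y)
      · intro x hx
        rw [huIcc] at hx
        have d1 : HasDerivAt (fun y : ℝ => (1 - y)^2) (-(2 * (1 - x))) x := by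
          have : HasDerivAt (fun y : ℝ => 1 - y) (-1) x :=
            (hasDerivAt_id x).const_sub 1
          have := this.fun_pow 2
          refine this.congr_deriv ?_
          ring
        have d2 := d1.fun_mul (hderiv x hx)
        have d3 := (hasDerivAt_id x).fun_add d2
        refine d3.congr_deriv ?_
        simp only [hgdef, hwdef]
        ring
      · exact ((hcg.sub hcw).mono huIcc.subset).intervalIntegrable
    have hsub : ∫ x in (0:ℝ)..1, (g x - w x) =
        (∫ x in (0:ℝ)..1, g x) - ∫ x in (0:ℝ)..1, w x :=
      intervalIntegral.integral_sub hig hiw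
    rw [hsub] at key
    simp only [hinit₁] at key
    norm_num at key
    linarith
  -- pointwise : w ≤ q
  have hwq : ∀ x ∈ Set.Icc (0:ℝ) 1, w x ≤ q x := by
    intro x hx
    have h1 := hpos x hx
    have h2 := hord2 x hx
    have h3 := hup x hx
    have h4 : (0:ℝ) ≤ 1 - x := by linarith [hx.2]
    have h5 : 0 ≤ (1 - x) * h₁ x := mul_nonneg h4 h1.le
    have key : (1 - x) * (h₁ x - h₀ x) ≤ (h₁ x - h₀ x) / h₁ x := by
      rw [le_div_iff₀ h1]
      nlinarith
    have knn : 0 ≤ (1 - x) * (h₁ x - h₀ x) := mul_nonneg h4 (by linarith)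
    have := pow_le_pow_left₀ knn key 2
    simp only [hwdef, hqdef]
    calc (1 - x)^2 * (h₁ x - h₀ x)^2 = ((1 - x) * (h₁ x - h₀ x))^2 := by ring
      _ ≤ ((h₁ x - h₀ x) / h₁ x)^2 := this
  -- pointwise : q ≤ (1 - (1-x) h₀)²
  have hqb : ∀ x ∈ Set.Icc (0:ℝ) 1, q x ≤ (1 - (1 - x) * h₀ x)^2 := by
    intro x hx
    have h1 := hpos x hx
    have h2 := hord2 x hx
    have h3 := hup x hx
    have h0 := h0nn x hx
    have h4 : (0:ℝ) ≤ 1 - x := by linarith [hx.2]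
    have hdiv : (h₁ x - h₀ x) / h₁ x = 1 - h₀ x / h₁ x := by
      field_simp
    have ha : 0 ≤ 1 - h₀ x / h₁ x := by
      rw [sub_nonneg, div_le_one h1]; exact h2
    have hab : 1 - h₀ x / h₁ x ≤ 1 - (1 - x) * h₀ x := by
      have : (1 - x) * h₀ x ≤ h₀ x / h₁ x := by
        rw [le_div_iff₀ h1]
        nlinarith
      linarith
    simp only [hqdef]
    rw [hdiv]
    exact pow_le_pow_left₀ ha hab 2
  constructor
  · calc (∫ x in (0:ℝ)..1, g x) = ∫ x in (0:ℝ)..1, w x := hB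
      _ ≤ ∫ x in (0:ℝ)..1, q x := by
          apply intervalIntegral.integral_mono_on h01 hiw hiq hwq
      _ = 1 / h₁ 1 := hA.symm
  · rw [hA]
    exact intervalIntegral.integral_mono_on h01 hiq hib hqb
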